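/- Let G be the time-invariant dynamic Bayesian network DAG of the environment and suppose the joint distribution of the variables is faithful to G. If g_{i,t} ∈ g_t^min, i.e., g_{i,t} has a directed path in G to some future reward node r_{t+k} (k > 0), then there exists k > 0 such that g_{i,t} is NOT conditionally independent of r_{t+k} given g_t^min \ {g_{i,t}} and a_t; consequently removing g_{i,t} from g_t^min changes the conditional distribution of future rewards, so no state in g_t^min can be pruned without loss. -/

import Mathlib

open Relation

/-- Nodes of the time-invariant dynamic Bayesian network: latent state
components `g_{i,t}`, actions `a_t`, and rewards `r_t`. -/
inductive DBNNode (d : ℕ) : Type where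
  | latent (i : Fin d) (t : ℕ)
  | action (t : ℕ)
  | reward (t : ℕ)
deriving DecidableEq

/-- The fixed binary structural masks of the DBN.  `cgg i j = true` encodes the
edge `g_{j,t-1} → g_{i,t}`, `cag i` the edge `a_{t-1} → g_{i,t}`, `cgr i` the
edge `g_{i,t-1} → r_t`, and `car` the edge `a_{t-1} → r_t`. -/
structure DBNMasks (d : ℕ) where
  cgg : Fin d → Fin d → Bool
  cag : Fin d → Bool
  cgr : Fin d → Bool
  car : Bool

/-- The directed edges of the time-invariant DBN graph `G`. -/
def DBNEdge {d : ℕ} (c : DBNMasks d) : DBNNode d → DBNNode d → Prop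
  | .latent j t, .latent i t' => t' = t + 1 ∧ c.cgg i j = true
  | .action t, .latent i t' => t' = t + 1 ∧ c.cag i = true
  | .latent i t, .reward t' => t' = t + 1 ∧ c.cgr i = true
  | .action t, .reward t' => t' = t + 1 ∧ c.car = true
  | _, _ => False

/-- Undirected adjacency induced by a directed edge relation. -/
def Adj {V : Type*} (E : V → V → Prop) (x y : V) : Prop := E x y ∨ E y x

/-- `p` is a (simple, undirected) path in the graph with edge relation `E`:
consecutive nodes are adjacent and no node repeats. -/
def IsPathList {V : Type*} (E : V → V → Prop) (p : List V) : Prop :=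
  p.Chain' (Adj E) ∧ p.Nodup

/-- A path `p` is blocked by the conditioning set `Z`: it contains a
chain `u → m → v` (in either direction) or a fork `u ← m → v` with middle
node `m ∈ Z`, or a collider `u → m ← v` with `m ∉ Z` and no descendant of
`m` in `Z`. -/
def BlockedBy {V : Type*} (E : V → V → Prop) (Z : Set V) (p : List V) : Prop :=
  ∃ u m v : V, [u, m, v] <:+: p ∧
    ((((E u m ∧ E m v) ∨ (E v m ∧ E m u) ∨ (E m u ∧ E m v)) ∧ m ∈ Z) ∨
      ((E u m ∧ E v m) ∧ m ∉ Z ∧ ∀ w : V, Relation.TransGen E m w → w ∉ Z))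

/-- `Z` d-separates `X` from `Y` in the graph with edge relation `E`: every
path between a node of `X` and a node of `Y` is blocked by `Z`. -/
def DSep {V : Type*} (E : V → V → Prop) (X Y Z : Set V) : Prop :=
  ∀ x ∈ X, ∀ y ∈ Y, ∀ p : List V,
    IsPathList E p → p.head? = some x → p.getLast? = some y → BlockedBy E Z p

/-- The joint distribution (represented abstractly by its ternary conditional
independence relation `CI X Y Z`, "X ⫫ Y given Z") satisfies the global Markov
condition w.r.t. the graph: d-separation implies conditional independence. -/
def GlobalMarkov {V : Type*} (E : V → V → Prop)
    (CI : Set V → Set V → Set V → Prop) : Prop :=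
  ∀ X Y Z : Set V, Disjoint X Y → Disjoint X Z → Disjoint Y Z →
    DSep E X Y Z → CI X Y Z

/-- The joint distribution is faithful to the graph: every conditional
independence corresponds to a d-separation. -/
def FaithfulTo {V : Type*} (E : V → V → Prop)
    (CI : Set V → Set V → Set V → Prop) : Prop :=
  ∀ X Y Z : Set V, Disjoint X Y → Disjoint X Z → Disjoint Y Z →
    CI X Y Z → DSep E X Y Z

/-- `g_{i,t} ∈ g_t^min` iff `c_i^{g→r} = 1` or `g_{i,t}` has a directed path in
`G` to a future reward `r_{t+k}` (some `k > 0`) passing through other latent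
state components. -/
def InMinSet {d : ℕ} (c : DBNMasks d) (i : Fin d) (t : ℕ) : Prop :=
  c.cgr i = true ∨
    ∃ k : ℕ, 0 < k ∧ ∃ (j : Fin d) (s : ℕ),
      Relation.TransGen (DBNEdge c) (DBNNode.latent i t) (DBNNode.latent j s) ∧
      Relation.TransGen (DBNEdge c) (DBNNode.latent j s) (DBNNode.reward (t + k))

/-- The minimal latent state set `g_t^min`, as a set of nodes of `G`. -/
def MinSet {d : ℕ} (c : DBNMasks d) (t : ℕ) : Set (DBNNode d) :=
  {n | ∃ i : Fin d, n = DBNNode.latent i t ∧ InMinSet c i t}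


/-- The time index of a DBN node. -/
def nodeTime {d : ℕ} : DBNNode d → ℕ
  | .latent _ t => t
  | .action t => t
  | .reward t => t

lemma edge_time {d : ℕ} {c : DBNMasks d} {x y : DBNNode d} (h : DBNEdge c x y) :
    nodeTime y = nodeTime x + 1 := by
  cases x <;> cases y <;> first | exact h.elim | exact h.1

lemma transGen_path {V : Type*} {E : V → V → Prop} {x y : V}
    (h : Relation.TransGen E x y) :
    ∃ p : List V, p.Chain' E ∧ p.head? = some x ∧ p.getLast? = some y := by
  induction h with
  | single h => exact ⟨[x, _], List.isChain_pair.mpr h, rfl, rfl⟩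
  | tail hab hbc ih =>
    obtain ⟨p, hc, hh, hl⟩ := ih
    rcases p with _ | ⟨a, q⟩
    · simp at hh
    refine ⟨(a :: q) ++ [_], ?_, by simpa using hh,
      by rw [show a :: q ++ [_] = (a :: q) ++ [_] from rfl, List.getLast?_concat]⟩
    show List.IsChain E _
    rw [List.isChain_append]
    refine ⟨hc, by simp, ?_⟩
    intro z hz w hw
    simp only [List.head?_cons, Option.mem_def, Option.some.injEq] at hw
    rw [hl] at hz
    simp only [Option.mem_def, Option.some.injEq] at hz
    subst hz; subst hw; exact hbc

/-- Under faithfulness, every member `g_{i,t}` of `g_t^min` is conditionally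
dependent on some future reward `r_{t+k}` (`k > 0`) given
`g_t^min \ {g_{i,t}}` and `a_t`; hence no state in `g_t^min` can be pruned. -/
theorem dependence_of_min_state (d : ℕ) (c : DBNMasks d)
    (CI : Set (DBNNode d) → Set (DBNNode d) → Set (DBNNode d) → Prop)
    (hFaithful : FaithfulTo (DBNEdge c) CI) (i : Fin d) (t : ℕ)
    (hMem : InMinSet c i t) :
    ∃ k : ℕ, 0 < k ∧
      ¬ CI {DBNNode.latent i t} {DBNNode.reward (t + k)}
        ((MinSet c t \ {DBNNode.latent i t}) ∪ {DBNNode.action t}) := by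
  have key : ∃ k : ℕ, 0 < k ∧
      Relation.TransGen (DBNEdge c) (DBNNode.latent i t) (DBNNode.reward (t + k)) := by
    rcases hMem with h | ⟨k, hk, j, s, h1, h2⟩
    · exact ⟨1, one_pos, Relation.TransGen.single ⟨rfl, h⟩⟩
    · exact ⟨k, hk, h1.trans h2⟩
  obtain ⟨k, hk, hTG⟩ := key
  refine ⟨k, hk, fun hCI => ?_⟩
  set Z : Set (DBNNode d) :=
    (MinSet c t \ {DBNNode.latent i t}) ∪ {DBNNode.action t} with hZdef
  have hZtime : ∀ n ∈ Z, nodeTime n = t := by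
    rintro n (⟨⟨i', rfl, -⟩, -⟩ | rfl) <;> rfl
  have hXY : Disjoint ({DBNNode.latent i t} : Set (DBNNode d))
      {DBNNode.reward (t + k)} := by simp
  have hXZ : Disjoint ({DBNNode.latent i t} : Set (DBNNode d)) Z := by
    rw [Set.disjoint_singleton_left]
    rintro (⟨-, h⟩ | h)
    · exact h rfl
    · simp at h
  have hYZ : Disjoint ({DBNNode.reward (t + k)} : Set (DBNNode d)) Z := by
    rw [Set.disjoint_singleton_left]
    rintro (⟨⟨i', h, -⟩, -⟩ | h) <;> simp at h
  have hDSep := hFaithful _ _ _ hXY hXZ hYZ hCI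
  obtain ⟨p, hchain, hhead, hlast⟩ := transGen_path hTG
  have hlt : p.Chain' (fun a b => nodeTime a < nodeTime b) :=
    hchain.imp fun a b h => by rw [edge_time h]; omega
  haveI : IsTrans (DBNNode d) (fun a b => nodeTime a < nodeTime b) :=
    ⟨fun _ _ _ => lt_trans⟩
  have hpw : p.Pairwise (fun a b => nodeTime a < nodeTime b) :=
    List.isChain_iff_pairwise.mp hlt
  have hnd : p.Nodup := hpw.imp fun h e => by subst e; exact lt_irrefl _ h
  have hblocked := hDSep _ rfl _ rfl p ⟨hchain.imp (fun a b h => Or.inl h), hnd⟩ hhead hlast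
  obtain ⟨u, m, v, hinf, hcase⟩ := hblocked
  have h3 : List.Chain' (DBNEdge c) [u, m, v] := hchain.infix hinf
  have hum : DBNEdge c u m := (List.isChain_cons_cons.mp h3).1
  have hmv : DBNEdge c m v := (List.isChain_cons_cons.mp (List.isChain_cons_cons.mp h3).2).1
  have hup : u ∈ p := hinf.subset (by simp)
  rcases p with _ | ⟨a, q⟩
  · simp at hhead
  have ha : a = DBNNode.latent i t := by simpa using hhead
  have hut : t ≤ nodeTime u := by
    rcases List.mem_cons.mp hup with rfl | hu
    · rw [ha]; exact le_of_eq rfl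
    · have := (List.pairwise_cons.mp hpw).1 u hu
      rw [ha] at this
      exact le_of_lt this
  have hmt : t + 1 ≤ nodeTime m := by
    rw [edge_time hum]; omega
  rcases hcase with ⟨-, hmZ⟩ | ⟨⟨-, hvm⟩, -, -⟩
  · have := hZtime m hmZ; omega
  · have h1 := edge_time hvm
    have h2 := edge_time hmv
    omega
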